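/- The Hamming weight distribution of the code E_10 is: 1 codeword of weight 0, 30 codewords of weight 4, 300 codewords of weight 6, 585 codewords of weight 8, 108 codewords of weight 10, and no codewords of any other weight. -/

import Mathlib

open scoped BigOperators

section Defs

variable {F : Type} [Field F] [DecidableEq F]

/-- The binary coordinate in column `j` (0-indexed), row `k`. -/
def idx (j : Fin 10) (k : Fin 4) : Fin 40 :=
  ⟨4 * j.val + k.val, by have := j.isLt; have := k.isLt; omega⟩

/-- The map φ : GF(4) → 𝔽₂⁴, 0↦0000, 1↦0011, ω↦0101, ϖ↦0110. -/
def phi (ω : F) : F → (Fin 4 → ZMod 2) := fun x =>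
  if x = 0 then ![0, 0, 0, 0]
  else if x = 1 then ![0, 0, 1, 1]
  else if x = ω then ![0, 1, 0, 1]
  else ![0, 1, 1, 0]

/-- Ĉ : the image of a quaternary code under coordinatewise φ. -/
def hatSet (ω : F) (C : Set (Fin 10 → F)) : Set (Fin 40 → ZMod 2) :=
  { v | ∃ c ∈ C, ∀ (j : Fin 10) (k : Fin 4), v (idx j k) = phi ω (c j) k }

/-- d₄¹⁰ : binary vectors of length 40 constant on each of the ten columns. -/
def d4ten : Set (Fin 40 → ZMod 2) :=
  { v | ∀ (j : Fin 10) (k k' : Fin 4), v (idx j k) = v (idx j k') }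

/-- (d₄¹⁰)₀ : the subcode of d₄¹⁰ of codewords of weight divisible by 8. -/
def d4ten0 : Set (Fin 40 → ZMod 2) :=
  { v | v ∈ d4ten ∧ 8 ∣ hammingNorm v }

/-- The generator 1000 1000 ... 1000 of e_C. -/
def eCvec : Fin 40 → ZMod 2 := fun i => if i.val % 4 = 0 then 1 else 0

/-- The generator 1000 (×9) 0111 of e_B. -/
def eBvec : Fin 40 → ZMod 2 := fun i =>
  if i.val < 36 then (if i.val % 4 = 0 then 1 else 0)
  else (if i.val % 4 = 0 then 0 else 1)

/-- ρ_C(C) = Ĉ + (d₄¹⁰)₀ + e_C. -/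
def rhoC (ω : F) (C : Set (Fin 10 → F)) : Set (Fin 40 → ZMod 2) :=
  { v | ∃ a ∈ hatSet ω C, ∃ b ∈ d4ten0,
      ∃ e ∈ ({0, eCvec} : Set (Fin 40 → ZMod 2)), v = a + b + e }

/-- ρ_B(C) = Ĉ + (d₄¹⁰)₀ + e_B. -/
def rhoB (ω : F) (C : Set (Fin 10 → F)) : Set (Fin 40 → ZMod 2) :=
  { v | ∃ a ∈ hatSet ω C, ∃ b ∈ d4ten0,
      ∃ e ∈ ({0, eBvec} : Set (Fin 40 → ZMod 2)), v = a + b + e }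

/-- The trace inner product x⋆y = Σ Tr(xᵢ ȳᵢ), computed in GF(4) (its value lies
in the prime subfield GF(2)). -/
def traceIP (x y : Fin 10 → F) : F :=
  ∑ i, ((x i * (y i) ^ 2) + (x i * (y i) ^ 2) ^ 2)

/-- The dual of an additive code with respect to the trace inner product. -/
def addDual (C : Set (Fin 10 → F)) : Set (Fin 10 → F) :=
  { x | ∀ c ∈ C, traceIP x c = 0 }

/-- The dual of a binary code of length 40 under the standard inner product. -/
def binDual (S : Set (Fin 40 → ZMod 2)) : Set (Fin 40 → ZMod 2) :=
  { x | ∀ c ∈ S, ∑ i, x i * c i = 0 }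

/-- The dual of a quaternary code under the Hermitian inner product ⟨x,y⟩ = Σ xᵢ ȳᵢ. -/
def hermDual (S : Set (Fin 10 → F)) : Set (Fin 10 → F) :=
  { x | ∀ c ∈ S, ∑ i, x i * (c i) ^ 2 = 0 }

/-- The Hermitian self-dual [10,5,4] code E₁₀ over GF(4). -/
def E10 (ω : F) : Submodule F (Fin 10 → F) :=
  Submodule.span F {![1,1,1,1,0,0,0,0,0,0], ![0,0,1,1,1,1,0,0,0,0],
    ![0,0,0,0,1,1,1,1,0,0], ![0,0,0,0,0,0,1,1,1,1],
    ![1,0,1,0,1,0,1,0,ω,ω^2]}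

/-- The Hermitian self-dual [10,5,4] code B₁₀ over GF(4). -/
def B10 (ω : F) : Submodule F (Fin 10 → F) :=
  Submodule.span F {![1,1,1,1,0,0,0,0,0,0], ![0,1,ω,ω^2,1,0,0,0,0,0],
    ![0,0,0,0,0,1,1,1,1,0], ![0,0,0,0,0,0,1,ω,ω^2,1],
    ![0,1,ω^2,ω,0,0,1,ω^2,ω,0]}

/-- Interpret a bit as an element of GF(4). -/
def b2f (x : ZMod 2) : F := if x = 1 then 1 else 0

/-- The projection 𝔽₂⁴⁰ → GF(4)¹⁰ : column j ↦ v₂ᵢₙ·1 + v·ω + v·ϖ with row labels 0,1,ω,ϖ. -/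
def Proj (ω : F) (v : Fin 40 → ZMod 2) : Fin 10 → F := fun j =>
  b2f (v (idx j 1)) * 1 + b2f (v (idx j 2)) * ω + b2f (v (idx j 3)) * ω ^ 2

/-- The parity of column j (1 = odd number of ones). -/
def colPar (v : Fin 40 → ZMod 2) (j : Fin 10) : ZMod 2 := ∑ k, v (idx j k)

/-- The parity of the top row (1 = odd number of ones). -/
def topPar (v : Fin 40 → ZMod 2) : ZMod 2 := ∑ j, v (idx j 0)

/-- The coordinate permutation of Fin 10 permuting the five blocks {2m, 2m+1}
as units according to π, preserving order within blocks. -/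
def blockPerm (π : Equiv.Perm (Fin 5)) : Fin 10 → Fin 10 := fun t =>
  ⟨2 * (π ⟨t.val / 2, by have := t.isLt; omega⟩).val + t.val % 2, by
    have := (π ⟨t.val / 2, by have := t.isLt; omega⟩).isLt; have := t.isLt; omega⟩

/-- The coordinate permutation of Fin 10 interchanging the two coordinates within
each block belonging to S, fixing all other coordinates. -/
def blockSwap (S : Finset (Fin 5)) : Fin 10 → Fin 10 := fun t =>
  if (⟨t.val / 2, by have := t.isLt; omega⟩ : Fin 5) ∈ S then
    ⟨2 * (t.val / 2) + (1 - t.val % 2), by have := t.isLt; omega⟩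
  else t

end Defs
/-! ### Auxiliary: a concrete model of GF(4) and the weight count of E₁₀ -/

inductive GF4 : Type
  | O | I | A | B
deriving DecidableEq

instance : Fintype GF4 :=
  ⟨⟨↑[GF4.O, GF4.I, GF4.A, GF4.B], Multiset.coe_nodup.mpr (by decide)⟩,
    fun x => by cases x <;> decide⟩

namespace GF4

def add : GF4 → GF4 → GF4
  | O, x => x
  | x, O => x
  | I, I => O
  | I, A => B
  | I, B => A
  | A, I => B
  | A, A => O
  | A, B => I
  | B, I => A
  | B, A => I
  | B, B => O

def mul : GF4 → GF4 → GF4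
  | O, _ => O
  | _, O => O
  | I, x => x
  | x, I => x
  | A, A => B
  | A, B => I
  | B, A => I
  | B, B => A

def inv : GF4 → GF4
  | O => O
  | I => I
  | A => B
  | B => A

instance : Zero GF4 := ⟨O⟩
instance : One GF4 := ⟨I⟩
instance : Add GF4 := ⟨add⟩
instance : Mul GF4 := ⟨mul⟩
instance : Neg GF4 := ⟨_root_.id⟩
instance : Inv GF4 := ⟨inv⟩

instance : CommRing GF4 where
  add_assoc := by decide
  zero_add := by decide
  add_zero := by decide
  add_comm := by decide
  neg_add_cancel := by decide
  left_distrib := by decide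
  right_distrib := by decide
  zero_mul := by decide
  mul_zero := by decide
  mul_assoc := by decide
  one_mul := by decide
  mul_one := by decide
  mul_comm := by decide
  nsmul := nsmulRec
  zsmul := zsmulRec

instance : Field GF4 where
  exists_pair_ne := ⟨O, I, by decide⟩
  mul_inv_cancel := by decide
  inv_zero := by decide
  nnqsmul := _
  qsmul := _

end GF4

section E10Aux

/-- Quintuples of coefficients. -/
abbrev Q5 : Type := GF4 × GF4 × GF4 × GF4 × GF4

/-- A quintuple as a `Fin 5`-indexed family. -/
def cvec (q : Q5) : Fin 5 → GF4 := ![q.1, q.2.1, q.2.2.1, q.2.2.2.1, q.2.2.2.2]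

open GF4 in
/-- The concrete generator matrix of E₁₀ over the concrete GF(4). -/
def Gc : Fin 5 → Fin 10 → GF4 :=
  ![![I,I,I,I,O,O,O,O,O,O],
    ![O,O,I,I,I,I,O,O,O,O],
    ![O,O,O,O,I,I,I,I,O,O],
    ![O,O,O,O,O,O,I,I,I,I],
    ![I,O,I,O,I,O,I,O,A,B]]

/-- The linear-combination map, written out coordinatewise. -/
def LcQ : Q5 → Fin 10 → GF4
  | (a, b, c, d, e) =>
    ![a + e, a, a + b + e, a + b, b + c + e, b + c,
      c + d + e, c + d, d + GF4.A * e, d + GF4.B * e]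

def nzGF4 : GF4 → ℕ
  | GF4.O => 0
  | _ => 1

/-- The weight of a combination, written out explicitly. -/
def wtQ : Q5 → ℕ
  | (a, b, c, d, e) =>
    nzGF4 (a + e) + nzGF4 a + nzGF4 (a + b + e) + nzGF4 (a + b) +
    nzGF4 (b + c + e) + nzGF4 (b + c) + nzGF4 (c + d + e) + nzGF4 (c + d) +
    nzGF4 (d + GF4.A * e) + nzGF4 (d + GF4.B * e)

set_option maxHeartbeats 1000000 in
lemma hNormLcQ : ∀ a b c d e : GF4, hammingNorm (LcQ (a, b, c, d, e)) = wtQ (a, b, c, d, e) := by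
  decide

set_option maxHeartbeats 1000000 in
lemma LcQSum : ∀ (a b c d e : GF4) (j : Fin 10),
    LcQ (a, b, c, d, e) j = ∑ i, cvec (a, b, c, d, e) i * Gc i j := by
  decide

lemma LcQInj : Function.Injective LcQ := by
  rintro ⟨a, b, c, d, e⟩ ⟨a', b', c', d', e'⟩ h
  have h1 : a = a' := congrFun h 1
  have h3 : a + b = a' + b' := congrFun h 3
  have h5 : b + c = b' + c' := congrFun h 5
  have h7 : c + d = c' + d' := congrFun h 7
  have h8 : d + GF4.A * e = d' + GF4.A * e' := congrFun h 8
  have h9 : d + GF4.B * e = d' + GF4.B * e' := congrFun h 9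
  rw [h1] at h3
  have hb : b = b' := add_left_cancel h3
  rw [hb] at h5
  have hc : c = c' := add_left_cancel h5
  rw [hc] at h7
  have hd : d = d' := add_left_cancel h7
  have hAB : GF4.A + GF4.B = (1 : GF4) := rfl
  have h2g : (1 : GF4) + 1 = 0 := rfl
  have he : e = e' := by
    linear_combination h8 + h9 - (e - e') * hAB - (d - d') * h2g
  rw [h1, hb, hc, hd, he]

variable {F : Type} [Field F] [DecidableEq F]

/-- Interpretation of the concrete GF(4) in `F`. -/
def gmap (ω : F) : GF4 → F
  | .O => 0
  | .I => 1
  | .A => ω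
  | .B => ω + 1

def ghom (ω : F) (hω : ω ^ 2 = ω + 1) (h2 : (1 : F) + 1 = 0) : GF4 →+* F where
  toFun := gmap ω
  map_zero' := rfl
  map_one' := rfl
  map_add' := by
    intro x y
    show gmap ω (GF4.add x y) = gmap ω x + gmap ω y
    cases x <;> cases y <;> simp only [GF4.add, gmap] <;>
      first
        | ring1
        | linear_combination -h2
        | linear_combination -ω * h2
        | linear_combination (-ω - 1) * h2
  map_mul' := by
    intro x y
    show gmap ω (GF4.mul x y) = gmap ω x * gmap ω y
    cases x <;> cases y <;> simp only [GF4.mul, gmap] <;>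
      first
        | ring1
        | linear_combination -hω
        | linear_combination -hω - ω * h2
        | linear_combination -hω + (-ω - 1) * h2

/-- The generators of E₁₀ as a `Fin 5`-indexed family. -/
def genF (ω : F) : Fin 5 → (Fin 10 → F) :=
  ![![1,1,1,1,0,0,0,0,0,0], ![0,0,1,1,1,1,0,0,0,0], ![0,0,0,0,1,1,1,1,0,0],
    ![0,0,0,0,0,0,1,1,1,1], ![1,0,1,0,1,0,1,0,ω,ω^2]]

lemma E10_eq (ω : F) : E10 ω = Submodule.span F (Set.range (genF ω)) := by
  unfold E10
  congr 1
  simp only [genF, Matrix.range_cons, Matrix.range_empty, Set.singleton_union,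
    Set.union_empty, insert_empty_eq]

lemma genF_eq (ω : F) (hω : ω ^ 2 = ω + 1) (h2 : (1 : F) + 1 = 0) :
    ∀ i j, genF ω i j = ghom ω hω h2 (Gc i j) := by
  intro i j
  fin_cases i <;> fin_cases j <;> first | rfl | exact hω

lemma key (ω : F) (hω : ω ^ 2 = ω + 1) (h2 : (1 : F) + 1 = 0) (q : Q5) :
    ∑ i, (ghom ω hω h2) (cvec q i) • genF ω i = fun j => (ghom ω hω h2) (LcQ q j) := by
  obtain ⟨a, b, c, d, e⟩ := q
  funext j
  rw [Finset.sum_apply]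
  have hpt : ∀ i ∈ Finset.univ, ((ghom ω hω h2) (cvec (a, b, c, d, e) i) • genF ω i) j
      = ghom ω hω h2 (cvec (a, b, c, d, e) i * Gc i j) := by
    intro i _
    rw [Pi.smul_apply, smul_eq_mul, genF_eq ω hω h2, ← map_mul]
  rw [Finset.sum_congr rfl hpt, ← map_sum, ← LcQSum]

end E10Aux
/-- The weight distribution of E₁₀ is 1 + 30y⁴ + 300y⁶ + 585y⁸ + 108y¹⁰. -/
theorem stmt_6 (F : Type) [Field F] [Fintype F] [DecidableEq F]
    (hF : Fintype.card F = 4) (ω : F) (hω : ω ^ 2 = ω + 1) :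
    ∀ w : ℕ,
      Nat.card {v : Fin 10 → F // v ∈ E10 ω ∧ hammingNorm v = w} =
        if w = 0 then 1
        else if w = 4 then 30
        else if w = 6 then 300
        else if w = 8 then 585
        else if w = 10 then 108
        else 0 := by
  intro w
  have h4 : ((Fintype.card F : ℕ) : F) = 0 := FiniteField.cast_card_eq_zero F
  rw [hF] at h4
  have h2 : (1 : F) + 1 = 0 := by
    have h22 : ((1 : F) + 1) * ((1 : F) + 1) = 0 := by
      push_cast at h4
      linear_combination h4
    rcases mul_eq_zero.mp h22 with h | h <;> exact h
  set f := ghom ω hω h2 with hf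
  have hinjf : Function.Injective f := f.injective
  have hmem : ∀ v : Fin 10 → F, v ∈ E10 ω ↔ ∃ q : Q5, v = fun j => f (LcQ q j) := by
    intro v
    rw [E10_eq, Submodule.mem_span_range_iff_exists_fun]
    constructor
    · rintro ⟨cF, rfl⟩
      have hbijf : Function.Bijective f :=
        (Fintype.bijective_iff_injective_and_card f).mpr ⟨hinjf, by rw [hF]; rfl⟩
      set eF : GF4 ≃ F := Equiv.ofBijective f hbijf with heF
      refine ⟨(eF.symm (cF 0), eF.symm (cF 1), eF.symm (cF 2), eF.symm (cF 3),
        eF.symm (cF 4)), ?_⟩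
      rw [← key ω hω h2]
      refine Finset.sum_congr rfl fun i _ => ?_
      have hsy : ∀ x : F, f (eF.symm x) = x := fun x => eF.apply_symm_apply x
      fin_cases i <;>
        first
          | exact congrArg (fun z : F => z • genF ω _) (hsy (cF 0)).symm
          | exact congrArg (fun z : F => z • genF ω _) (hsy (cF 1)).symm
          | exact congrArg (fun z : F => z • genF ω _) (hsy (cF 2)).symm
          | exact congrArg (fun z : F => z • genF ω _) (hsy (cF 3)).symm
          | exact congrArg (fun z : F => z • genF ω _) (hsy (cF 4)).symm
    · rintro ⟨q, rfl⟩
      exact ⟨fun i => f (cvec q i), key ω hω h2 q⟩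
  have hwt : ∀ u : Fin 10 → GF4, hammingNorm (fun j => f (u j)) = hammingNorm u := by
    intro u
    exact hammingNorm_comp (fun _ => f) (fun _ => hinjf) (fun _ => f.map_zero)
  have hNq : ∀ q : Q5, hammingNorm (LcQ q) = wtQ q := by
    rintro ⟨a, b, c, d, e⟩
    exact hNormLcQ a b c d e
  have hcard : Nat.card {v : Fin 10 → F // v ∈ E10 ω ∧ hammingNorm v = w}
      = Fintype.card {q : Q5 // wtQ q = w} := by
    rw [← Nat.card_eq_fintype_card]
    refine (Nat.card_eq_of_bijective
      (fun q => ⟨fun j => f (LcQ q.1 j), (hmem _).mpr ⟨q.1, rfl⟩, by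
        rw [hwt, hNq]; exact q.2⟩) ⟨?_, ?_⟩).symm
    · intro q q' hqq
      have hval := congrArg Subtype.val hqq
      have h2' : LcQ q.1 = LcQ q'.1 := funext fun j => hinjf (congrFun hval j)
      exact Subtype.ext (LcQInj h2')
    · rintro ⟨v, hv, hvw⟩
      obtain ⟨q, rfl⟩ := (hmem v).mp hv
      refine ⟨⟨q, ?_⟩, rfl⟩
      rw [hwt, hNq] at hvw
      exact hvw
  have hsum : Fintype.card {q : Q5 // wtQ q = w}
      = ∑ a : GF4, ∑ b : GF4, ∑ c : GF4, ∑ d : GF4, ∑ e : GF4,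
          (if wtQ (a, b, c, d, e) = w then 1 else 0) := by
    rw [Fintype.card_subtype]
    rw [show (Finset.univ.filter fun q : Q5 => wtQ q = w).card
        = ∑ q : Q5, if wtQ q = w then 1 else 0 from by
      simpa using Finset.natCast_card_filter (fun q : Q5 => wtQ q = w) Finset.univ]
    simp only [Fintype.sum_prod_type]
  rw [hcard, hsum]
  by_cases hwle : w ≤ 10
  · interval_cases w <;> decide
  · have hb : ∀ a b c d e : GF4, wtQ (a, b, c, d, e) ≤ 10 := by decide
    have hz : ∀ a b c d e : GF4, (if wtQ (a, b, c, d, e) = w then (1:ℕ) else 0) = 0 := by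
      intro a b c d e
      rw [if_neg]
      intro hcontra
      exact hwle (hcontra ▸ hb a b c d e)
    simp only [hz, Finset.sum_const_zero]
    rw [if_neg (by omega), if_neg (by omega), if_neg (by omega), if_neg (by omega),
      if_neg (by omega)]
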